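/- Let B ≥ 1 and let T_0, T_1, …, T_B be exchangeable nonnegative integrable random variables on a probability space, i.e., the joint distribution of (T_0, …, T_B) is invariant under every permutation of the indices {0, 1, …, B}. Define the conformal e-value e := T_0 / ( (1/(B+1)) ∑_{b=0}^B T_b ), with the convention that the ratio equals 1 on the event where ∑_{b=0}^B T_b = 0. Then E[e] = 1; in particular, e is an e-variable. -/

import Mathlib

open MeasureTheory

/-- The conformal e-value has expectation 1: if `T 0, …, T B` are exchangeable
nonnegative integrable random variables, then
`E[ T 0 / ((1/(B+1)) ∑_b T b) ] = 1`, with the convention that the ratio is 1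
on the event where `∑_b T b = 0`. -/
theorem conformal_e_value_expectation_one
    {Ω : Type*} [MeasurableSpace Ω] (μ : Measure Ω) [IsProbabilityMeasure μ]
    (B : ℕ) (hB : 1 ≤ B) (T : Fin (B + 1) → Ω → ℝ)
    (hmeas : ∀ b, Measurable (T b))
    (hnonneg : ∀ b ω, 0 ≤ T b ω)
    (hint : ∀ b, Integrable (T b) μ)
    (hexch : ∀ σ : Equiv.Perm (Fin (B + 1)),
      Measure.map (fun ω => fun i => T (σ i) ω) μ =
        Measure.map (fun ω => fun i => T i ω) μ) :
    ∫ ω, (if (∑ b, T b ω) = 0 then 1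
      else T 0 ω / ((1 / ((B : ℝ) + 1)) * ∑ b, T b ω)) ∂μ = 1 := by
  classical
  have hB1 : (0:ℝ) < (B:ℝ) + 1 := by positivity
  set g : Fin (B + 1) → (Fin (B + 1) → ℝ) → ℝ :=
    fun i x => if (∑ b, x b) = 0 then 1 else x i / ((1 / ((B : ℝ) + 1)) * ∑ b, x b) with hg
  have hsum_meas : Measurable (fun x : Fin (B+1) → ℝ => ∑ b, x b) :=
    Finset.measurable_sum _ (fun i _ => measurable_pi_apply i)
  have hg_meas : ∀ i, Measurable (g i) := by
    intro i
    exact Measurable.ite (hsum_meas (measurableSet_singleton 0)) measurable_const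
      ((measurable_pi_apply i).div (measurable_const.mul hsum_meas))
  have hT : Measurable (fun ω => fun b => T b ω) := measurable_pi_lambda _ hmeas
  set f : Fin (B+1) → Ω → ℝ := fun i ω => g i (fun b => T b ω) with hf
  have hf_meas : ∀ i, Measurable (f i) := fun i => (hg_meas i).comp hT
  have hf_bound : ∀ i ω, ‖f i ω‖ ≤ (B : ℝ) + 1 := by
    intro i ω
    simp only [hf, hg, Real.norm_eq_abs]
    split_ifs with h
    · rw [abs_one]; linarith
    · have hS : 0 < ∑ b, T b ω :=
        lt_of_le_of_ne (Finset.sum_nonneg fun b _ => hnonneg b ω) (Ne.symm h)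
      have hle : T i ω ≤ ∑ b, T b ω :=
        Finset.single_le_sum (fun b _ => hnonneg b ω) (Finset.mem_univ i)
      rw [abs_of_nonneg (div_nonneg (hnonneg i ω) (by positivity)), div_le_iff₀ (by positivity)]
      calc T i ω ≤ ∑ b, T b ω := hle
        _ = ((B:ℝ)+1) * ((1/((B:ℝ)+1)) * ∑ b, T b ω) := by field_simp
  have hf_int : ∀ i, Integrable (f i) μ := fun i =>
    (integrable_const ((B:ℝ)+1)).mono' (hf_meas i).aestronglyMeasurable
      (ae_of_all μ fun ω => hf_bound i ω)
  have key : ∀ i, ∫ ω, f i ω ∂μ = ∫ ω, f 0 ω ∂μ := by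
    intro i
    set σ := Equiv.swap (0 : Fin (B+1)) i with hσ
    have hTσ : Measurable (fun ω => fun j => T (σ j) ω) :=
      measurable_pi_lambda _ (fun j => hmeas (σ j))
    have h1 : ∀ ω, f i ω = g 0 (fun j => T (σ j) ω) := by
      intro ω
      have hs : ∑ b, T (σ b) ω = ∑ b, T b ω := Equiv.sum_comp σ (fun b => T b ω)
      simp only [hf, hg, hs, hσ, Equiv.swap_apply_left]
      rw [← hσ, hs]
    calc ∫ ω, f i ω ∂μ = ∫ ω, g 0 ((fun ω => fun j => T (σ j) ω) ω) ∂μ := by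
          exact integral_congr_ae (ae_of_all μ h1)
      _ = ∫ x, g 0 x ∂(Measure.map (fun ω => fun j => T (σ j) ω) μ) :=
          (integral_map hTσ.aemeasurable (hg_meas 0).aestronglyMeasurable).symm
      _ = ∫ x, g 0 x ∂(Measure.map (fun ω => fun j => T j ω) μ) := by rw [hexch σ]
      _ = ∫ ω, g 0 ((fun ω => fun j => T j ω) ω) ∂μ :=
          integral_map hT.aemeasurable (hg_meas 0).aestronglyMeasurable
      _ = ∫ ω, f 0 ω ∂μ := rfl
  have hsum : ∀ ω, ∑ i, f i ω = (B:ℝ) + 1 := by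
    intro ω
    simp only [hf, hg]
    by_cases h : (∑ b, T b ω) = 0
    · simp [h, Finset.card_univ]
    · have hS : 0 < ∑ b, T b ω :=
        lt_of_le_of_ne (Finset.sum_nonneg fun b _ => hnonneg b ω) (Ne.symm h)
      simp only [h, if_false]
      rw [← Finset.sum_div]
      field_simp
  have hsumint : ∑ i : Fin (B+1), ∫ ω, f i ω ∂μ = (B:ℝ) + 1 := by
    rw [← integral_finset_sum _ (fun i _ => hf_int i)]
    calc ∫ ω, ∑ i, f i ω ∂μ = ∫ _, ((B:ℝ)+1) ∂μ :=
          integral_congr_ae (ae_of_all μ hsum)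
      _ = (B:ℝ) + 1 := by simp
  have hmul : ((B:ℝ)+1) * ∫ ω, f 0 ω ∂μ = (B:ℝ) + 1 := by
    rw [Finset.sum_congr rfl (fun i _ => key i), Finset.sum_const,
      Finset.card_univ, Fintype.card_fin, nsmul_eq_mul] at hsumint
    push_cast at hsumint
    linarith
  exact mul_left_cancel₀ (ne_of_gt hB1) (hmul.trans (mul_one _).symm)
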